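/- Fix a field k and r ∈ ℕ. Consider the k-linear map f : A^r → k[x_1,…,x_r] defined on basis vectors by f(e_{i_1,…,i_r}) = x_1^{i_1−1} x_2^{i_2−i_1−1} ⋯ x_r^{i_r−i_{r−1}−1}. Then: (1) f is an isomorphism of k-vector spaces; and (2) for any subspace V of A^r spanned by a set of basis vectors e_t, V is a k[I]-submodule of A^r if and only if f(V) is an ideal of k[x_1,…,x_r]. In particular, f induces a bijection between the monomial k[I]-submodules of A^r and the monomial ideals of k[x_1,…,x_r]. -/

import Mathlib

open scoped Classical

noncomputable section

/-- The increasing monoid `I`: the submonoid of `Function.End ℕ+` (functions under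
composition) consisting of strictly increasing functions `σ : ℕ+ → ℕ+` such that
`σ n = n + ℓ` for some `ℓ` and all sufficiently large `n`. -/
def IncMonoid : Submonoid (Function.End ℕ+) where
  carrier := {f | StrictMono f ∧ ∃ (l : ℕ) (N : ℕ+), ∀ n : ℕ+, N ≤ n → ((f n : ℕ) = (n : ℕ) + l)}
  one_mem' := ⟨fun _ _ h => h, 0, 1, fun n _ => by show ((n : ℕ+) : ℕ) = (n : ℕ) + 0; omega⟩
  mul_mem' := by
    rintro f g ⟨hf1, lf, Nf, hf2⟩ ⟨hg1, lg, Ng, hg2⟩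
    refine ⟨hf1.comp hg1, lg + lf, max Nf Ng, fun n hn => ?_⟩
    have h1 : (g n : ℕ) = (n : ℕ) + lg := hg2 n (le_trans (le_max_right _ _) hn)
    have h2 : Nf ≤ g n := by
      rw [← PNat.coe_le_coe, h1]
      have : (Nf : ℕ) ≤ (n : ℕ) := (PNat.coe_le_coe _ _).2 (le_trans (le_max_left _ _) hn)
      omega
    have h3 := hf2 (g n) h2
    show ((f (g n) : ℕ)) = (n : ℕ) + (lg + lf)
    omega

/-- The increasing monoid, as a type. -/
abbrev IncM : Type := IncMonoid

theorem IncM.strictMono (σ : IncM) : StrictMono σ.1 := σ.2.1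

theorem IncM.le_apply (σ : IncM) (n : ℕ+) : n ≤ σ.1 n := by
  induction n using PNat.recOn with
  | one => exact (σ.1 1).one_le
  | succ n ih =>
      have h2 : σ.1 n < σ.1 (n + 1) := σ.strictMono (by rw [← PNat.coe_lt_coe]; push_cast; omega)
      rw [← PNat.coe_le_coe] at *
      rw [← PNat.coe_lt_coe] at h2
      push_cast at *
      omega

/-- The underlying function of the generator `α_k`. -/
def alphaFun (k : ℕ+) : Function.End ℕ+ := fun n => if n < k then n else n + 1

theorem alphaFun_strictMono (k : ℕ+) : StrictMono (alphaFun k) := by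
  intro a b hab
  unfold alphaFun
  split_ifs with h1 h2 <;>
    rw [← PNat.coe_lt_coe] at * <;> push_cast at * <;> omega

theorem alphaFun_mem (k : ℕ+) : alphaFun k ∈ IncMonoid := by
  refine ⟨alphaFun_strictMono k, 1, k, fun n hn => ?_⟩
  unfold alphaFun
  rw [if_neg (not_lt.2 hn)]
  push_cast
  ring

/-- The generator `α_k` of the increasing monoid (`k ≥ 1`). -/
def alpha (k : ℕ+) : IncM := ⟨alphaFun k, alphaFun_mem k⟩

/-- The submonoid `I_{≥ n}` of `I` generated by the `α_i` with `i ≥ n`. -/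
def Iges (n : ℕ+) : Submonoid IncM := Submonoid.closure (alpha '' Set.Ici n)

/-- The submonoid `I_{> n}` of `I` generated by the `α_i` with `i > n`. -/
def Igt (n : ℕ) : Submonoid IncM := Submonoid.closure {s | ∃ i : ℕ+, n < (i : ℕ) ∧ s = alpha i}

/-- The monoid algebra `k[I]` of the increasing monoid. -/
abbrev IncAlg (k : Type*) [Field k] : Type _ := MonoidAlgebra k IncM

/-- The image of `σ ∈ I` in the monoid algebra `k[I]`. -/
abbrev ofInc (k : Type*) [Field k] (σ : IncM) : IncAlg k := MonoidAlgebra.of k IncM σ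

/-- A `k[I]`-module is smooth if every vector is fixed by some `I_{>n}`. -/
def IsSmoothMod (k : Type*) [Field k] (M : Type*) [AddCommMonoid M]
    [Module (IncAlg k) M] : Prop :=
  ∀ x : M, ∃ n : ℕ, ∀ σ ∈ Igt n, ofInc k σ • x = x

/-! ### The principal modules `A^r` -/

/-- Index set for the basis of the principal module `A^r`:
strictly increasing `r`-tuples of positive integers. -/
def Idx (r : ℕ) : Type := {v : Fin r → ℕ+ // StrictMono v}

/-- The action of `σ ∈ I` on the index set of `A^r`. -/
def idxAct {r : ℕ} (σ : IncM) (t : Idx r) : Idx r :=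
  ⟨σ.1 ∘ t.1, (IncM.strictMono σ).comp t.2⟩

/-- The representation of the increasing monoid on the principal module `A^r`. -/
def prinRep (k : Type*) [Field k] (r : ℕ) : Representation k IncM (Idx r →₀ k) where
  toFun σ := Finsupp.lmapDomain k k (idxAct σ)
  map_one' := LinearMap.ext fun v => by
    have h : (idxAct (1 : IncM) : Idx r → Idx r) = id := funext fun t => rfl
    simp [Finsupp.lmapDomain_apply, h, Finsupp.mapDomain_id]
  map_mul' := fun σ τ => LinearMap.ext fun v => by
    have h : (idxAct (σ * τ) : Idx r → Idx r) = (idxAct σ) ∘ (idxAct τ) :=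
      funext fun t => rfl
    show Finsupp.lmapDomain k k (idxAct (σ * τ)) v =
      Finsupp.lmapDomain k k (idxAct σ) (Finsupp.lmapDomain k k (idxAct τ) v)
    simp [Finsupp.lmapDomain_apply, h, Finsupp.mapDomain_comp]

/-- The principal module `A^r`, as a module over the monoid algebra `k[I]`. -/
abbrev PrinMod (k : Type*) [Field k] (r : ℕ) : Type _ := (prinRep k r).asModule

/-- The basis vector `e_t` of the principal module `A^r`. -/
def ePrin (k : Type*) [Field k] {r : ℕ} (t : Idx r) : PrinMod k r :=
  (prinRep k r).asModuleEquiv.symm (Finsupp.single t 1)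

/-- The tuple `(1, 2, …, r)` indexing the canonical generator `e_{1,…,r}` of `A^r`. -/
def iotaIdx (r : ℕ) : Idx r :=
  ⟨fun i => ⟨(i : ℕ) + 1, Nat.succ_pos _⟩, fun a b h => by
    first
      | (rw [← PNat.coe_lt_coe]; simp only [PNat.mk_coe]; exact Nat.succ_lt_succ h)
      | (show (a : ℕ) + 1 < (b : ℕ) + 1; exact Nat.succ_lt_succ h)⟩

/-! ### The simple modules `B^n` -/

/-- `σ ∈ I` fixes the natural number `n`, with the convention `σ 0 = 0`. -/
def fixesNat (σ : IncM) (n : ℕ) : Prop := ∀ h : 0 < n, σ.1 ⟨n, h⟩ = ⟨n, h⟩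

theorem fixesNat_mul (σ τ : IncM) (n : ℕ) :
    fixesNat (σ * τ) n ↔ fixesNat σ n ∧ fixesNat τ n := by
  rcases Nat.eq_zero_or_pos n with h0 | h0
  · subst h0
    constructor
    · exact fun _ => ⟨fun h => absurd h (lt_irrefl 0), fun h => absurd h (lt_irrefl 0)⟩
    · exact fun _ h => absurd h (lt_irrefl 0)
  · set p : ℕ+ := ⟨n, h0⟩
    have happ : ∀ h : 0 < n, (σ * τ).1 ⟨n, h⟩ = σ.1 (τ.1 ⟨n, h⟩) := fun _ => rfl
    constructor
    · intro h
      have hfix : σ.1 (τ.1 p) = p := h h0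
      have h1 : p ≤ τ.1 p := τ.le_apply p
      have h2 : τ.1 p ≤ σ.1 (τ.1 p) := σ.le_apply _
      have hτp : τ.1 p = p := le_antisymm (h2.trans_eq hfix) h1
      have hσp : σ.1 p = p := by rw [hτp] at hfix; exact hfix
      exact ⟨fun _ => hσp, fun _ => hτp⟩
    · rintro ⟨hσ, hτ⟩ h
      rw [happ h]
      have := hτ h0
      rw [this, hσ h0]

/-- The representation of the increasing monoid on the simple module `B^n`:
`σ` acts by the identity if `σ(n) = n` (with `σ(0) = 0`) and by `0` otherwise. -/
def bRep (k : Type*) [Field k] (n : ℕ) : Representation k IncM k where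
  toFun σ := if fixesNat σ n then 1 else 0
  map_one' := by
    try dsimp only
    rw [if_pos]
    intro h
    rfl
  map_mul' := fun σ τ => by
    try dsimp only
    by_cases hσ : fixesNat σ n
    · by_cases hτ : fixesNat τ n
      · rw [if_pos ((fixesNat_mul σ τ n).2 ⟨hσ, hτ⟩), if_pos hσ, if_pos hτ, one_mul]
      · rw [if_neg (fun h => hτ ((fixesNat_mul σ τ n).1 h).2), if_pos hσ, if_neg hτ, one_mul]
    · by_cases hτ : fixesNat τ n
      · rw [if_neg (fun h => hσ ((fixesNat_mul σ τ n).1 h).1), if_neg hσ, if_pos hτ, mul_one]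
      · rw [if_neg (fun h => hσ ((fixesNat_mul σ τ n).1 h).1), if_neg hσ, if_neg hτ, mul_zero]

/-- The simple module `B^n`, as a module over the monoid algebra `k[I]`. -/
abbrev BMod (k : Type*) [Field k] (n : ℕ) : Type _ := (bRep k n).asModule

/-- The value of the tuple `t` at the position preceding `j` (and `0` for `j` the
first position). -/
def prevVal {r : ℕ} (t : Idx r) (j : Fin r) : ℕ :=
  if h : (j : ℕ) = 0 then 0
  else (t.1 ⟨(j : ℕ) - 1, Nat.lt_of_le_of_lt (Nat.sub_le _ _) j.isLt⟩ : ℕ)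

/-- The exponent vector associated to a basis index of `A^r`:
`(i_1, …, i_r) ↦ (i_1 - 1, i_2 - i_1 - 1, …, i_r - i_{r-1} - 1)`. -/
def expOf {r : ℕ} (t : Idx r) : Fin r →₀ ℕ :=
  Finsupp.equivFunOnFinite.symm fun j => (t.1 j : ℕ) - prevVal t j - 1

/-- The `k`-linear map `A^r → k[x_1,…,x_r]` sending
`e_{i_1,…,i_r}` to `x_1^{i_1-1} x_2^{i_2-i_1-1} ⋯ x_r^{i_r-i_{r-1}-1}`. -/
def prinToPoly (k : Type*) [Field k] (r : ℕ) :
    (Idx r →₀ k) →ₗ[k] MvPolynomial (Fin r) k :=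
  Finsupp.lift (MvPolynomial (Fin r) k) k (Idx r) fun t =>
    MvPolynomial.monomial (expOf t) (1 : k)


/-! ### Auxiliary machinery for the correspondence -/

section Aux

variable {r : ℕ}

/-- Auxiliary: value of an exponent vector at a natural number position. -/
def gOf (m : Fin r →₀ ℕ) (i : ℕ) : ℕ := if h : i < r then m ⟨i, h⟩ else 0

/-- Partial sums determining the inverse of `expOf`. -/
def FOf (m : Fin r →₀ ℕ) (n : ℕ) : ℕ := ∑ i ∈ Finset.range (n + 1), (gOf m i + 1)

theorem FOf_zero (m : Fin r →₀ ℕ) : FOf m 0 = gOf m 0 + 1 := by simp [FOf]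

theorem FOf_succ (m : Fin r →₀ ℕ) (n : ℕ) :
    FOf m (n + 1) = FOf m n + (gOf m (n + 1) + 1) := Finset.sum_range_succ _ _

theorem FOf_pos (m : Fin r →₀ ℕ) (n : ℕ) : 0 < FOf m n := by
  induction n with
  | zero => rw [FOf_zero]; omega
  | succ n ih => rw [FOf_succ]; omega

theorem FOf_strictMono (m : Fin r →₀ ℕ) : StrictMono (FOf m) :=
  strictMono_nat_of_lt_succ fun n => by rw [FOf_succ]; omega

/-- The inverse of the exponent map `expOf`. -/
def idxOf (m : Fin r →₀ ℕ) : Idx r :=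
  ⟨fun j => ⟨FOf m (j : ℕ), FOf_pos m _⟩, fun a b h => by
    exact (PNat.coe_lt_coe ⟨FOf m a, FOf_pos m _⟩ ⟨FOf m b, FOf_pos m _⟩).1
      (FOf_strictMono m (by exact_mod_cast h))⟩

theorem expOf_apply (t : Idx r) (j : Fin r) :
    expOf t j = (t.1 j : ℕ) - prevVal t j - 1 := rfl

theorem prevVal_of_eq_zero (t : Idx r) (j : Fin r) (h : (j : ℕ) = 0) :
    prevVal t j = 0 := dif_pos h

theorem prevVal_of_ne_zero (t : Idx r) (j : Fin r) (h : (j : ℕ) ≠ 0) :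
    prevVal t j =
      (t.1 ⟨(j : ℕ) - 1, Nat.lt_of_le_of_lt (Nat.sub_le _ _) j.isLt⟩ : ℕ) := dif_neg h

theorem expOf_idxOf (m : Fin r →₀ ℕ) : expOf (idxOf m) = m := by
  ext j
  rw [expOf_apply]
  have hval : ((idxOf m).1 j : ℕ) = FOf m (j : ℕ) := rfl
  rcases Nat.eq_zero_or_pos (j : ℕ) with h0 | h0
  · rw [prevVal_of_eq_zero _ _ h0, hval, h0, FOf_zero]
    have : gOf m 0 = m j := by
      unfold gOf
      rw [dif_pos (h0 ▸ j.isLt)]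
      congr 1
      exact Fin.ext h0.symm
    omega
  · obtain ⟨n, hn⟩ : ∃ n, (j : ℕ) = n + 1 := ⟨(j : ℕ) - 1, by omega⟩
    rw [prevVal_of_ne_zero _ _ (by omega), hval]
    have hprev : ∀ h : (j : ℕ) - 1 < r,
        ((idxOf m).1 ⟨(j : ℕ) - 1, h⟩ : ℕ) = FOf m ((j : ℕ) - 1) := fun _ => rfl
    rw [hprev _, hn]
    simp only [Nat.add_sub_cancel]
    rw [FOf_succ]
    have : gOf m (n + 1) = m j := by
      unfold gOf
      rw [dif_pos (hn ▸ j.isLt)]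
      congr 1
      exact Fin.ext hn.symm
    omega

theorem FOf_expOf (t : Idx r) : ∀ n (h : n < r), FOf (expOf t) n = (t.1 ⟨n, h⟩ : ℕ) := by
  intro n
  induction n with
  | zero =>
    intro h
    rw [FOf_zero]
    have hg : gOf (expOf t) 0 = expOf t ⟨0, h⟩ := by unfold gOf; rw [dif_pos h]
    rw [hg, expOf_apply, prevVal_of_eq_zero _ _ rfl]
    have := (t.1 ⟨0, h⟩).property
    rw [Nat.sub_zero]
    exact Nat.sub_add_cancel this
  | succ n ih =>
    intro h
    rw [FOf_succ, ih (by omega)]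
    have hg : gOf (expOf t) (n + 1) = expOf t ⟨n + 1, h⟩ := by unfold gOf; rw [dif_pos h]
    rw [hg, expOf_apply, prevVal_of_ne_zero _ _ (by simp)]
    have hlt : t.1 ⟨n, by omega⟩ < t.1 ⟨n + 1, h⟩ := t.2 (by simp)
    have hprev : (t.1 ⟨n + 1 - 1, _⟩ : ℕ) = (t.1 ⟨n, by omega⟩ : ℕ) := rfl
    rw [hprev]
    rw [← PNat.coe_lt_coe] at hlt
    omega

theorem idxOf_expOf (t : Idx r) : idxOf (expOf t) = t := by
  apply Subtype.ext
  funext j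
  apply PNat.coe_injective
  show FOf (expOf t) (j : ℕ) = (t.1 j : ℕ)
  rw [FOf_expOf t (j : ℕ) j.isLt]

theorem expOf_injective : Function.Injective (expOf : Idx r → Fin r →₀ ℕ) :=
  Function.LeftInverse.injective idxOf_expOf

variable (k : Type*) [Field k]

theorem prinToPoly_single (t : Idx r) (c : k) :
    prinToPoly k r (Finsupp.single t c) = MvPolynomial.monomial (expOf t) c := by
  rw [prinToPoly, Finsupp.lift_apply, Finsupp.sum_single_index (by simp),
    MvPolynomial.smul_monomial, smul_eq_mul, mul_one]

theorem coeff_prinToPoly (v : Idx r →₀ k) (t : Idx r) :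
    MvPolynomial.coeff (expOf t) (prinToPoly k r v) = v t := by
  induction v using Finsupp.induction_linear with
  | zero => simp
  | add f g hf hg => rw [map_add, MvPolynomial.coeff_add, hf, hg]; simp
  | single a b =>
    rw [prinToPoly_single, MvPolynomial.coeff_monomial, Finsupp.single_apply]
    by_cases h : a = t
    · rw [if_pos (by rw [h]), if_pos h]
    · rw [if_neg (fun hc => h (expOf_injective hc)), if_neg h]

theorem prinToPoly_injective : Function.Injective (prinToPoly k r) := fun v w h =>
  Finsupp.ext fun t => by rw [← coeff_prinToPoly, h, coeff_prinToPoly]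

theorem prinToPoly_surjective : Function.Surjective (prinToPoly k r) := by
  intro p
  refine ⟨∑ m ∈ p.support, Finsupp.single (idxOf m) (MvPolynomial.coeff m p), ?_⟩
  rw [map_sum]
  conv_rhs => rw [← MvPolynomial.support_sum_monomial_coeff p]
  exact Finset.sum_congr rfl fun m _ => by rw [prinToPoly_single, expOf_idxOf]

theorem prinRep_apply_single (σ : IncM) (t : Idx r) (c : k) :
    prinRep k r σ (Finsupp.single t c) = Finsupp.single (idxAct σ t) c := by
  show Finsupp.lmapDomain k k (idxAct σ) (Finsupp.single t c) = _
  rw [Finsupp.lmapDomain_apply, Finsupp.mapDomain_single]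

theorem mem_span_single_iff (S : Set (Idx r)) (u : Idx r) :
    Finsupp.single u (1 : k) ∈
      Submodule.span k ((fun t => Finsupp.single t (1 : k)) '' S) ↔ u ∈ S := by
  rw [← Finsupp.supported_eq_span_single, Finsupp.mem_supported]
  constructor
  · intro h
    exact h (by simp [Finsupp.support_single_ne_zero u (one_ne_zero (α := k))])
  · intro h
    rw [Finsupp.support_single_ne_zero u (one_ne_zero (α := k))]
    simpa using h

/-- The stability condition for a set of basis indices. -/
def StableSet (S : Set (Idx r)) : Prop := ∀ t ∈ S, ∀ σ : IncM, idxAct σ t ∈ S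

theorem lhs_iff_stable (S : Set (Idx r)) :
    (∀ σ : IncM, ∀ v ∈ Submodule.span k ((fun t => Finsupp.single t (1 : k)) '' S),
        prinRep k r σ v ∈ Submodule.span k ((fun t => Finsupp.single t (1 : k)) '' S)) ↔
      StableSet S := by
  constructor
  · intro h t ht σ
    have h1 : Finsupp.single t (1 : k) ∈
        Submodule.span k ((fun t => Finsupp.single t (1 : k)) '' S) :=
      Submodule.subset_span ⟨t, ht, rfl⟩
    have h2 := h σ _ h1
    rw [prinRep_apply_single] at h2
    exact (mem_span_single_iff k S _).1 h2
  · intro h σ v hv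
    have h1 : Submodule.map (prinRep k r σ)
        (Submodule.span k ((fun t => Finsupp.single t (1 : k)) '' S)) ≤
        Submodule.span k ((fun t => Finsupp.single t (1 : k)) '' S) := by
      rw [Submodule.map_span]
      apply Submodule.span_le.2
      rintro _ ⟨_, ⟨t, ht, rfl⟩, rfl⟩
      rw [prinRep_apply_single]
      exact Submodule.subset_span ⟨_, h t ht σ, rfl⟩
    exact h1 ⟨v, hv, rfl⟩

/-- The step-closure condition on exponent sets. -/
def StepClosed (E : Set (Fin r →₀ ℕ)) : Prop :=
  ∀ m ∈ E, ∀ i : Fin r, m + Finsupp.single i 1 ∈ E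

theorem FOf_add_single (m : Fin r →₀ ℕ) (i : Fin r) (n : ℕ) :
    FOf (m + Finsupp.single i 1) n = FOf m n + (if (i : ℕ) ≤ n then 1 else 0) := by
  unfold FOf
  have key : ∀ l : ℕ, gOf (m + Finsupp.single i 1) l + 1 =
      (gOf m l + 1) + (if l = (i : ℕ) then 1 else 0) := by
    intro l
    unfold gOf
    by_cases h : l < r
    · rw [dif_pos h, dif_pos h, Finsupp.add_apply, Finsupp.single_apply]
      by_cases hli : (⟨l, h⟩ : Fin r) = i
      · rw [if_pos hli.symm, if_pos (show l = (i : ℕ) by rw [← hli])]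
      · rw [if_neg (fun hc => hli hc.symm),
          if_neg (fun hc : l = (i : ℕ) => hli (Fin.ext hc))]
        omega
    · rw [dif_neg h, dif_neg h, if_neg (by have := i.isLt; omega)]
  simp only [key, Finset.sum_add_distrib]
  congr 1
  rw [Finset.sum_ite_eq' (Finset.range (n + 1)) (i : ℕ) (fun _ => 1)]
  simp [Nat.lt_succ_iff]

theorem idxAct_alpha_eq (t : Idx r) (i : Fin r) :
    idxAct (alpha (t.1 i)) t = idxOf (expOf t + Finsupp.single i 1) := by
  apply Subtype.ext
  funext j
  apply PNat.coe_injective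
  show ((alphaFun (t.1 i)) (t.1 j) : ℕ) = FOf (expOf t + Finsupp.single i 1) (j : ℕ)
  rw [FOf_add_single, FOf_expOf t (j : ℕ) j.isLt]
  have hj : t.1 ⟨(j : ℕ), j.isLt⟩ = t.1 j := rfl
  rw [hj]
  unfold alphaFun
  by_cases h : t.1 j < t.1 i
  · have : (j : ℕ) < (i : ℕ) := by
      by_contra hc
      exact absurd (t.2.le_iff_le.2 (Fin.le_def.2 (by omega))) (not_le.2 h)
    rw [if_pos h, if_neg (by omega)]
    omega
  · have hij : (i : ℕ) ≤ (j : ℕ) := by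
      by_contra hc
      exact h (t.2 (Fin.lt_def.2 (by omega)))
    rw [if_neg h, if_pos hij]
    push_cast
    ring

theorem stable_to_step (S : Set (Idx r)) (h : StableSet S) : StepClosed (expOf '' S) := by
  rintro _ ⟨t, ht, rfl⟩ i
  refine ⟨idxAct (alpha (t.1 i)) t, h t ht _, ?_⟩
  rw [idxAct_alpha_eq, expOf_idxOf]

theorem step_up (E : Set (Fin r →₀ ℕ)) (h : StepClosed E) :
    ∀ (d : Fin r →₀ ℕ), ∀ m ∈ E, m + d ∈ E := by
  suffices key : ∀ N (d : Fin r →₀ ℕ), (∑ j, d j) = N → ∀ m ∈ E, m + d ∈ E by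
    intro d m hm; exact key _ d rfl m hm
  intro N
  induction N with
  | zero =>
    intro d hd m hm
    have : d = 0 := by
      ext j
      have := Finset.sum_eq_zero_iff.1 hd j (Finset.mem_univ j)
      simpa using this
    rw [this, add_zero]; exact hm
  | succ N ih =>
    intro d hd m hm
    have hne : ∃ i : Fin r, d i ≠ 0 := by
      by_contra hc
      push_neg at hc
      rw [Finset.sum_eq_zero (fun j _ => hc j)] at hd
      omega
    obtain ⟨i, hi⟩ := hne
    have hle : Finsupp.single i 1 ≤ d := Finsupp.single_le_iff.2 (by omega)
    set d' := d - Finsupp.single i 1 with hd'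
    have hdd : d' + Finsupp.single i 1 = d := tsub_add_cancel_of_le hle
    have hsum : (∑ j, d' j) = N := by
      have : ∀ j, d' j + Finsupp.single i 1 j = d j := fun j => by
        rw [← Finsupp.add_apply, hdd]
      have h2 : (∑ j, d' j) + (∑ j, (Finsupp.single i 1 : Fin r →₀ ℕ) j) = N + 1 := by
        rw [← Finset.sum_add_distrib]
        rw [Finset.sum_congr rfl fun j _ => this j, hd]
      have h3 : (∑ j, (Finsupp.single i 1 : Fin r →₀ ℕ) j) = 1 := by
        simp [Finsupp.single_apply]
      omega
    have := h (m + d') (ih d' hsum m hm) i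
    rwa [add_assoc, hdd] at this

theorem incM_gap (σ : IncM) : ∀ (d : ℕ) (a : ℕ+),
    (σ.1 a : ℕ) + d ≤
      (σ.1 ⟨(a : ℕ) + d, Nat.lt_of_lt_of_le a.2 (Nat.le_add_right _ _)⟩ : ℕ) := by
  intro d
  induction d with
  | zero =>
    intro a
    have h0 : (⟨(a : ℕ) + 0, Nat.lt_of_lt_of_le a.2 (Nat.le_add_right _ _)⟩ : ℕ+) = a :=
      Subtype.ext rfl
    rw [h0]
    omega
  | succ d ih =>
    intro a
    have h1 := ih a
    have h2 : σ.1 ⟨(a : ℕ) + d, Nat.lt_of_lt_of_le a.2 (Nat.le_add_right _ _)⟩ <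
        σ.1 ⟨(a : ℕ) + (d + 1), Nat.lt_of_lt_of_le a.2 (Nat.le_add_right _ _)⟩ :=
      σ.strictMono ((PNat.coe_lt_coe _ _).1 (Nat.lt_succ_self _))
    rw [← PNat.coe_lt_coe] at h2
    omega

theorem incM_monotone_gap (σ : IncM) (a b : ℕ+) (hab : a ≤ b) :
    (b : ℕ) - (a : ℕ) ≤ (σ.1 b : ℕ) - (σ.1 a : ℕ) := by
  have h1 := incM_gap σ ((b : ℕ) - (a : ℕ)) a
  have hb : (⟨(a : ℕ) + ((b : ℕ) - (a : ℕ)),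
      Nat.lt_of_lt_of_le a.2 (Nat.le_add_right _ _)⟩ : ℕ+) = b := by
    have : (a : ℕ) ≤ (b : ℕ) := hab
    apply Subtype.ext
    show (a : ℕ) + ((b : ℕ) - (a : ℕ)) = (b : ℕ)
    omega
  rw [hb] at h1
  omega

theorem expOf_le_expOf_idxAct (σ : IncM) (t : Idx r) :
    expOf t ≤ expOf (idxAct σ t) := by
  rw [Finsupp.le_def]
  intro j
  rw [expOf_apply, expOf_apply]
  have hval : ((idxAct σ t).1 j : ℕ) = (σ.1 (t.1 j) : ℕ) := rfl
  have hle := σ.le_apply (t.1 j)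
  rw [← PNat.coe_le_coe] at hle
  rcases Nat.eq_zero_or_pos (j : ℕ) with h0 | h0
  · rw [prevVal_of_eq_zero _ _ h0, prevVal_of_eq_zero _ _ h0, hval]
    omega
  · rw [prevVal_of_ne_zero _ _ (by omega), prevVal_of_ne_zero _ _ (by omega), hval]
    have hprev : ((idxAct σ t).1 ⟨(j : ℕ) - 1, _⟩ : ℕ) =
        (σ.1 (t.1 ⟨(j : ℕ) - 1, Nat.lt_of_le_of_lt (Nat.sub_le _ _) j.isLt⟩) : ℕ) := rfl
    rw [hprev]
    set a := t.1 ⟨(j : ℕ) - 1, Nat.lt_of_le_of_lt (Nat.sub_le _ _) j.isLt⟩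
    have hab : a ≤ t.1 j := le_of_lt (t.2 (by rw [Fin.lt_def]; simp; omega))
    have := incM_monotone_gap σ a (t.1 j) hab
    have hab' : (a : ℕ) ≤ (t.1 j : ℕ) := hab
    have hab2 : (σ.1 a : ℕ) ≤ (σ.1 (t.1 j) : ℕ) := by
      rcases eq_or_lt_of_le hab with he | hl
      · rw [he]
      · exact le_of_lt (by exact_mod_cast σ.strictMono hl)
    omega

theorem step_to_stable (S : Set (Idx r)) (h : StepClosed (expOf '' S)) : StableSet S := by
  intro t ht σ
  have hle := expOf_le_expOf_idxAct σ t
  have hE : expOf (idxAct σ t) ∈ expOf '' S := by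
    have := step_up _ h (expOf (idxAct σ t) - expOf t) (expOf t) ⟨t, ht, rfl⟩
    rwa [add_tsub_cancel_of_le hle] at this
  obtain ⟨t', ht', heq⟩ := hE
  rwa [← expOf_injective heq]

/-- The ideal of polynomials supported on an upward-closed set of exponents. -/
def suppIdeal (E : Set (Fin r →₀ ℕ))
    (hE : ∀ (d : Fin r →₀ ℕ), ∀ m ∈ E, m + d ∈ E) : Ideal (MvPolynomial (Fin r) k) where
  carrier := {p | ∀ m ∈ p.support, m ∈ E}
  zero_mem' := by simp
  add_mem' := by
    intro p q hp hq m hm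
    rcases Finset.mem_union.1 (Finsupp.support_add hm) with h | h
    · exact hp m h
    · exact hq m h
  smul_mem' := by
    intro c p hp m hm
    rw [smul_eq_mul] at hm
    rcases Finset.mem_add.1 (MvPolynomial.support_mul c p hm) with ⟨u, hu, v, hv, rfl⟩
    have := hE u v (hp v hv)
    rwa [add_comm] at this

theorem rhs_iff_step (S : Set (Idx r)) :
    (∃ J : Ideal (MvPolynomial (Fin r) k),
        (J : Set (MvPolynomial (Fin r) k)) =
          prinToPoly k r ''
            (Submodule.span k ((fun t => Finsupp.single t (1 : k)) '' S))) ↔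
      StepClosed (expOf '' S) := by
  have himg : prinToPoly k r ''
      ((Submodule.span k ((fun t => Finsupp.single t (1 : k)) '' S) : Submodule k _) :
        Set (Idx r →₀ k)) =
      ((Submodule.span k ((fun m => MvPolynomial.monomial m (1 : k)) '' (expOf '' S)) :
        Submodule k (MvPolynomial (Fin r) k)) : Set (MvPolynomial (Fin r) k)) := by
    have hsets : prinToPoly k r '' ((fun t => Finsupp.single t (1 : k)) '' S) =
        (fun m => MvPolynomial.monomial m (1 : k)) '' (expOf '' S) := by
      rw [Set.image_image, Set.image_image]
      exact Set.image_congr fun t _ => prinToPoly_single k t 1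
    rw [← Submodule.map_coe, Submodule.map_span, hsets]
  constructor
  · rintro ⟨J, hJ⟩
    rintro _ ⟨t, ht, rfl⟩ i
    have hmem : MvPolynomial.monomial (expOf t) (1 : k) ∈ J := by
      rw [← SetLike.mem_coe, hJ]
      exact ⟨Finsupp.single t 1, Submodule.subset_span ⟨t, ht, rfl⟩,
        prinToPoly_single k t 1⟩
    have hmul : MvPolynomial.monomial (expOf t + Finsupp.single i 1) (1 : k) ∈ J := by
      have := J.mul_mem_left (MvPolynomial.monomial (Finsupp.single i 1) (1 : k)) hmem
      rwa [MvPolynomial.monomial_mul, one_mul, add_comm] at this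
    rw [← SetLike.mem_coe, hJ] at hmul
    obtain ⟨v, hv, hfv⟩ := hmul
    have hv2 : v = Finsupp.single (idxOf (expOf t + Finsupp.single i 1)) (1 : k) := by
      apply prinToPoly_injective k
      rw [hfv, prinToPoly_single, expOf_idxOf]
    rw [hv2] at hv
    have := (mem_span_single_iff k S _).1 hv
    exact ⟨_, this, expOf_idxOf _⟩
  · intro hstep
    have hup := step_up _ hstep
    refine ⟨suppIdeal k (expOf '' S) (fun d m hm => hup d m hm), ?_⟩
    rw [himg]
    apply Set.Subset.antisymm
    · intro p hp
      have hrep : p = ∑ m ∈ p.support, MvPolynomial.monomial m (MvPolynomial.coeff m p) :=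
        (MvPolynomial.support_sum_monomial_coeff p).symm
      rw [SetLike.mem_coe, hrep]
      apply Submodule.sum_mem
      intro m hm
      have : MvPolynomial.monomial m (MvPolynomial.coeff m p) =
          (MvPolynomial.coeff m p) • MvPolynomial.monomial m (1 : k) := by
        rw [MvPolynomial.smul_monomial, smul_eq_mul, mul_one]
      rw [this]
      exact Submodule.smul_mem _ _ (Submodule.subset_span ⟨m, hp m hm, rfl⟩)
    · have : Submodule.span k ((fun m => MvPolynomial.monomial m (1 : k)) '' (expOf '' S)) ≤
          (suppIdeal k (expOf '' S) (fun d m hm => hup d m hm)).restrictScalars k := by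
        apply Submodule.span_le.2
        rintro _ ⟨m, hm, rfl⟩
        intro u hu
        rw [MvPolynomial.support_monomial, if_neg (one_ne_zero (α := k))] at hu
        rwa [Finset.mem_singleton.1 hu]
      exact fun p hp => this hp

end Aux

/-- The map `f : A^r → k[x_1,…,x_r]` is a linear isomorphism, and a
subspace `V` spanned by basis vectors is a `k[I]`-submodule if and only if `f(V)` is
an ideal of the polynomial ring. -/
theorem principal_module_monomial_ideal_correspondence (k : Type*) [Field k] (r : ℕ) :
    Function.Bijective (prinToPoly k r) ∧
    ∀ S : Set (Idx r),
      ((∀ σ : IncM, ∀ v ∈ Submodule.span k ((fun t => Finsupp.single t (1 : k)) '' S),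
          prinRep k r σ v ∈ Submodule.span k ((fun t => Finsupp.single t (1 : k)) '' S)) ↔
        ∃ J : Ideal (MvPolynomial (Fin r) k),
          (J : Set (MvPolynomial (Fin r) k)) =
            prinToPoly k r ''
              (Submodule.span k ((fun t => Finsupp.single t (1 : k)) '' S))) := by
  constructor
  · exact ⟨prinToPoly_injective k, prinToPoly_surjective k⟩
  · intro S
    rw [lhs_iff_stable k S, rhs_iff_step k S]
    exact ⟨stable_to_step S, step_to_stable S⟩


end
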